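/- 𝔰 ≤ μ₁, where μ₁ is the minimum size of an L₁-splitting family. -/
import Mathlib

/-- `S` splits the infinite set `A`. -/
def Splits (S A : Set ℕ) : Prop := (A ∩ S).Infinite ∧ (A \ S).Infinite

/-- A splitting family. -/
def IsSplittingFamily (𝒮 : Set (Set ℕ)) : Prop :=
  (∀ S ∈ 𝒮, S.Infinite) ∧ ∀ A : Set ℕ, A.Infinite → ∃ S ∈ 𝒮, Splits S A

/-- The splitting number 𝔰. -/
noncomputable def sNumber : Cardinal :=
  sInf {c | ∃ 𝒮 : Set (Set ℕ), IsSplittingFamily 𝒮 ∧ Cardinal.mk 𝒮 = c}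

/-- `f : [ω]^n → ω^{n+1}` (values strictly increasing tuples) belongs to `L_n`:
no restriction of `f` to the `n`-subsets of an infinite set has image inside a
single cone `C_s` with `s` nonempty. -/
def MemL (n : ℕ) (f : Finset ℕ → (Fin (n + 1) → ℕ)) : Prop :=
  (∀ s : Finset ℕ, s.card = n → StrictMono (f s)) ∧
  ¬ ∃ (X : Set ℕ) (m : ℕ) (_ : 1 ≤ m) (hm : m ≤ n + 1) (t : Fin m → ℕ),
      X.Infinite ∧ ∀ s : Finset ℕ, s.card = n → ↑s ⊆ X →
        ∀ i : Fin m, f s (Fin.castLE hm i) = t i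

/-- `S` `L_n`-splits `f`. -/
def LSplits (n : ℕ) (S : Set ℕ) (f : Finset ℕ → (Fin (n + 1) → ℕ)) : Prop :=
  ∃ X Y : Set ℕ, X.Infinite ∧ Y.Infinite ∧ Disjoint X Y ∧
    (∀ s : Finset ℕ, s.card = n → ↑s ⊆ X → ∀ i, f s i ∈ S) ∧
    (∀ s : Finset ℕ, s.card = n → ↑s ⊆ Y → ∀ i, f s i ∉ S)

/-- An `L_n`-splitting family. -/
def IsLSplittingFamily (n : ℕ) (𝒮 : Set (Set ℕ)) : Prop :=
  (∀ S ∈ 𝒮, S.Infinite) ∧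
  ∀ f : Finset ℕ → (Fin (n + 1) → ℕ), MemL n f → ∃ S ∈ 𝒮, LSplits n S f

/-- `μ_n`, the least size of an `L_n`-splitting family. -/
noncomputable def muNumber (n : ℕ) : Cardinal :=
  sInf {c | ∃ 𝒮 : Set (Set ℕ), IsLSplittingFamily n 𝒮 ∧ Cardinal.mk 𝒮 = c}

lemma castLE_eq_zero : ∀ (h : (1:ℕ) ≤ 2) (i : Fin 1), Fin.castLE h i = (0 : Fin 2) := by
  decide

lemma castLE_zero {m : ℕ} (h1 : 1 ≤ m) (hm2 : m ≤ 2) :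
    Fin.castLE hm2 (⟨0, h1⟩ : Fin m) = (0 : Fin 2) := by
  apply Fin.ext
  simp [Fin.castLE]

lemma fiber_finite {f : Finset ℕ → Fin 2 → ℕ} (hf : MemL 1 f) (c : ℕ) :
    {k : ℕ | f {k} 0 = c}.Finite := by
  by_contra h
  apply hf.2
  refine ⟨{k : ℕ | f {k} 0 = c}, 1, le_refl 1, by norm_num, fun _ => c, h, ?_⟩
  intro s hs hsX i
  obtain ⟨a, rfl⟩ := Finset.card_eq_one.mp hs
  have ha : a ∈ {k : ℕ | f {k} 0 = c} := hsX (by simp)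
  rw [castLE_eq_zero]
  exact ha

lemma exists_big {f : Finset ℕ → Fin 2 → ℕ} (hf : MemL 1 f) (N : ℕ) :
    ∃ k, N < f {k} 0 := by
  have hfin : {k : ℕ | f {k} 0 ≤ N}.Finite := by
    have hsub : {k : ℕ | f {k} 0 ≤ N} ⊆ ⋃ c ∈ Set.Iic N, {k : ℕ | f {k} 0 = c} := by
      intro k hk; exact Set.mem_biUnion hk rfl
    exact Set.Finite.subset
      (Set.Finite.biUnion (Set.finite_Iic N) (fun c _ => fiber_finite hf c)) hsub
  obtain ⟨k, hk⟩ := hfin.infinite_compl.nonempty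
  exact ⟨k, not_le.mp hk⟩

lemma exists_lsplit {f : Finset ℕ → Fin 2 → ℕ} (hf : MemL 1 f) :
    ∃ S : Set ℕ, S.Infinite ∧ LSplits 1 S f := by
  choose g hg using fun N => exists_big hf N
  obtain ⟨k, hstep⟩ : ∃ k : ℕ → ℕ, ∀ i, f {k i} 1 < f {k (i+1)} 0 :=
    ⟨fun i => Nat.rec (g 0) (fun _ p => g (f {p} 1)) i, fun i => hg _⟩
  have hlt : ∀ i, f {k i} 0 < f {k i} 1 := fun i =>
    hf.1 {k i} (Finset.card_singleton _) (show (0:Fin 2) < 1 by decide)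
  have ha : StrictMono (fun i => f {k i} 0) :=
    strictMono_nat_of_lt_succ (fun i => lt_trans (hlt i) (hstep i))
  have hsep : ∀ i j (u v : Fin 2), i < j → f {k i} u < f {k j} v := by
    intro i j u v hij
    have h1 : f {k i} u ≤ f {k i} 1 := by
      fin_cases u
      · exact le_of_lt (hlt i)
      · exact le_refl _
    have h2 : f {k j} 0 ≤ f {k j} v := by
      fin_cases v
      · exact le_refl _
      · exact le_of_lt (hlt j)
    have h3 : f {k (i+1)} 0 ≤ f {k j} 0 := ha.monotone hij
    exact lt_of_le_of_lt h1 (lt_of_lt_of_le (hstep i) (le_trans h3 h2))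
  have hdist : ∀ i j (u v : Fin 2), f {k i} u = f {k j} v → i = j := by
    intro i j u v he
    rcases lt_trichotomy i j with h|h|h
    · exact absurd he (ne_of_lt (hsep i j u v h))
    · exact h
    · exact absurd he.symm (ne_of_lt (hsep j i v u h))
  have kinj : ∀ i j : ℕ, k i = k j → i = j := fun i j h => hdist i j 0 0 (by rw [h])
  refine ⟨{m | ∃ i u, f {k (2*i)} u = m}, ?_,
    Set.range (fun i => k (2*i)), Set.range (fun i => k (2*i+1)), ?_, ?_, ?_, ?_, ?_⟩
  · exact Set.infinite_of_injective_forall_mem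
      (f := fun i : ℕ => f {k (2*i)} 0)
      (fun i j h => by have := hdist _ _ 0 0 h; omega)
      (fun i => ⟨i, 0, rfl⟩)
  · exact Set.infinite_range_of_injective
      (fun i j h => by have h' : k (2*i) = k (2*j) := h; have := kinj _ _ h'; omega)
  · exact Set.infinite_range_of_injective
      (fun i j h => by have h' : k (2*i+1) = k (2*j+1) := h; have := kinj _ _ h'; omega)
  · rw [Set.disjoint_left]
    rintro x ⟨i, rfl⟩ ⟨j, hj⟩
    have hj' : k (2*j+1) = k (2*i) := hj
    have := kinj _ _ hj'
    omega
  · intro s hs hsub u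
    obtain ⟨a, rfl⟩ := Finset.card_eq_one.mp hs
    have hmem : a ∈ Set.range (fun i => k (2*i)) := hsub (by simp)
    obtain ⟨i, hi⟩ := hmem
    have hi' : k (2*i) = a := hi
    subst hi'
    exact ⟨i, u, rfl⟩
  · intro s hs hsub u
    obtain ⟨a, rfl⟩ := Finset.card_eq_one.mp hs
    have hmem : a ∈ Set.range (fun i => k (2*i+1)) := hsub (by simp)
    obtain ⟨j, hj⟩ := hmem
    have hj' : k (2*j+1) = a := hj
    subst hj'
    rintro ⟨i, v, hv⟩
    have := hdist _ _ v u hv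
    omega

lemma isL1family : IsLSplittingFamily 1 {S : Set ℕ | S.Infinite} := by
  refine ⟨fun S hS => hS, fun f hf => ?_⟩
  obtain ⟨S, hS, h⟩ := exists_lsplit hf
  exact ⟨S, hS, h⟩

lemma splitting_of_L1 {𝒮 : Set (Set ℕ)} (h : IsLSplittingFamily 1 𝒮) :
    IsSplittingFamily 𝒮 := by
  refine ⟨h.1, fun A hA => ?_⟩
  set e : ℕ → ℕ := fun n => ((Set.Infinite.natEmbedding A hA) n : ℕ) with he
  have einj : Function.Injective e :=
    fun a b hab => (Set.Infinite.natEmbedding A hA).injective (Subtype.ext hab)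
  have emem : ∀ n, e n ∈ A := fun n => ((Set.Infinite.natEmbedding A hA) n).2
  set f : Finset ℕ → Fin 2 → ℕ := fun s j =>
    if j = 0 then min (e (2 * s.sum id)) (e (2 * s.sum id + 1))
    else max (e (2 * s.sum id)) (e (2 * s.sum id + 1)) with hfdef
  have hne : ∀ m : ℕ, e (2*m) ≠ e (2*m+1) := fun m hmm => by have := einj hmm; omega
  have hf0 : ∀ m : ℕ, f {m} 0 = min (e (2*m)) (e (2*m+1)) := by
    intro m; simp [hfdef, Finset.sum_singleton]
  have hf1 : ∀ m : ℕ, f {m} 1 = max (e (2*m)) (e (2*m+1)) := by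
    intro m
    simp only [hfdef, Finset.sum_singleton, id]
    rw [if_neg (by decide)]
  have clash : ∀ m m' : ℕ, f {m} 0 = f {m'} 0 → m = m' := by
    intro m m' hmm
    rw [hf0, hf0] at hmm
    rcases min_choice (e (2*m)) (e (2*m+1)) with h1|h1 <;>
      rcases min_choice (e (2*m')) (e (2*m'+1)) with h2|h2 <;>
      · rw [h1, h2] at hmm; have := einj hmm; omega
  have hmemA : ∀ m : ℕ, f {m} 0 ∈ A := by
    intro m
    rw [hf0]
    rcases min_choice (e (2*m)) (e (2*m+1)) with hc|hc <;> rw [hc] <;> exact emem _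
  have hfL : MemL 1 f := by
    constructor
    · intro s hs i j hij
      obtain ⟨a, rfl⟩ := Finset.card_eq_one.mp hs
      have key : f {a} 0 < f {a} 1 := by
        rw [hf0, hf1]
        exact min_lt_max.mpr (hne a)
      fin_cases i <;> fin_cases j
      · exact absurd hij (by decide)
      · exact key
      · exact absurd hij (by decide)
      · exact absurd hij (by decide)
    · rintro ⟨X, m, h1, hm2, t, hX, hcone⟩
      obtain ⟨x, hx, y, hy, hxy⟩ := hX.nontrivial
      have hxc := hcone {x} (Finset.card_singleton x) (by simpa using hx) ⟨0, h1⟩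
      have hyc := hcone {y} (Finset.card_singleton y) (by simpa using hy) ⟨0, h1⟩
      rw [castLE_zero h1 hm2] at hxc hyc
      exact hxy (clash x y (hxc.trans hyc.symm))
  obtain ⟨S, hS𝒮, X, Y, hXinf, hYinf, _, hXS, hYS⟩ := h.2 f hfL
  refine ⟨S, hS𝒮, ?_, ?_⟩
  · have himg : ((fun x => f {x} 0) '' X).Infinite :=
      hXinf.image (fun a _ b _ hab => clash a b hab)
    apply himg.mono
    rintro _ ⟨x, hx, rfl⟩
    exact ⟨hmemA x, hXS {x} (Finset.card_singleton x) (by simpa using hx) 0⟩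
  · have himg : ((fun x => f {x} 0) '' Y).Infinite :=
      hYinf.image (fun a _ b _ hab => clash a b hab)
    apply himg.mono
    rintro _ ⟨y, hy, rfl⟩
    exact ⟨hmemA y, hYS {y} (Finset.card_singleton y) (by simpa using hy) 0⟩

/-- `𝔰 ≤ μ₁`. -/
theorem s_le_mu_one : sNumber ≤ muNumber 1 := by
  apply le_csInf
  · exact ⟨Cardinal.mk {S : Set ℕ | S.Infinite}, {S : Set ℕ | S.Infinite}, isL1family, rfl⟩
  · rintro c ⟨𝒮, h𝒮, rfl⟩
    exact csInf_le (OrderBot.bddBelow _) ⟨𝒮, splitting_of_L1 h𝒮, rfl⟩
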